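/- Exact self-similar blow-up solution of the 3D Burgers equation: Let W̄ : ℝ³ → ℝ be defined by W̄(y) = B(y̌)^{−1/2} W₁d( B(y̌)^{3/2} y₁ ), where y̌ = (y₂,y₃) and B(y̌) = 1/(1 + y₂² + y₃²). Fix T ∈ ℝ and define v : ℝ³ × (−∞, T) → ℝ³ by v₁(x,t) = (T−t)^{1/2} W̄( x₁/(T−t)^{3/2}, x₂/(T−t)^{1/2}, x₃/(T−t)^{1/2} ) and v₂ = v₃ ≡ 0. Then v is C^∞ on ℝ³ × (−∞,T), solves the 3D Burgers equation ∂ₜv + (v·∇)v = 0 there, and satisfies ∂_{x₁}v₁(0, t) = −1/(T−t) for all t < T; in particular ∂_{x₁}v₁(0,t) → −∞ as t → T⁻, so v forms a gradient blow-up at the single space-time point (0, T). -/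

import Mathlib

noncomputable section

/-- Points of physical space `ℝ³`. -/
abbrev V3 : Type := Fin 3 → ℝ

/-- Spatial partial derivative `∂ⱼ f` of a scalar function of `(x, t) ∈ ℝ³ × ℝ`. -/
def pd (j : Fin 3) (f : V3 × ℝ → ℝ) (p : V3 × ℝ) : ℝ :=
  fderiv ℝ f p ((Pi.single j 1 : V3), (0 : ℝ))

/-- Time derivative `∂ₜ f` of a scalar function of `(x, t) ∈ ℝ³ × ℝ`. -/
def pt (f : V3 × ℝ → ℝ) (p : V3 × ℝ) : ℝ :=
  fderiv ℝ f p ((0 : V3), (1 : ℝ))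

/-- The stable self-similar profile of the 1D Burgers equation. -/
def W1d (y : ℝ) : ℝ :=
  (-y / 2 + Real.sqrt (1 / 27 + y ^ 2 / 4)) ^ ((1 : ℝ) / 3)
    - (y / 2 + Real.sqrt (1 / 27 + y ^ 2 / 4)) ^ ((1 : ℝ) / 3)

/-- `B(y̌) = 1/(1 + y₂² + y₃²)`. -/
def Bf (y : V3) : ℝ := 1 / (1 + y 1 ^ 2 + y 2 ^ 2)

/-- The explicit 3D self-similar Burgers profile
`W̄(y) = B(y̌)^{−1/2} W₁d(B(y̌)^{3/2} y₁)`. -/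
def Wbar (y : V3) : ℝ :=
  Bf y ^ (-(1 : ℝ) / 2) * W1d (Bf y ^ ((3 : ℝ) / 2) * y 0)

/-- The exact self-similar solution of 3D Burgers with blow-up time `T`:
`v₁(x,t) = (T−t)^{1/2} W̄(x₁/(T−t)^{3/2}, x₂/(T−t)^{1/2}, x₃/(T−t)^{1/2})`, `v₂ = v₃ = 0`. -/
def vBlow (T : ℝ) (p : V3 × ℝ) : V3 :=
  ![(T - p.2) ^ ((1 : ℝ) / 2) *
      Wbar ![p.1 0 / (T - p.2) ^ ((3 : ℝ) / 2),
            p.1 1 / (T - p.2) ^ ((1 : ℝ) / 2),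
            p.1 2 / (T - p.2) ^ ((1 : ℝ) / 2)],
    0, 0]

/-! ### Auxiliary material -/

/-- The Cardano solution of `v³ + c v + a = 0` as a function of `(a, c)`. -/
def gC (p : ℝ × ℝ) : ℝ :=
  (-p.1 / 2 + Real.sqrt (p.2 ^ 3 / 27 + p.1 ^ 2 / 4)) ^ ((1 : ℝ) / 3)
    - (p.1 / 2 + Real.sqrt (p.2 ^ 3 / 27 + p.1 ^ 2 / 4)) ^ ((1 : ℝ) / 3)

lemma sqrt_pos_aux {a c : ℝ} (hc : 0 < c) :
    |a| / 2 < Real.sqrt (c ^ 3 / 27 + a ^ 2 / 4) := by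
  rw [show (|a| / 2) = Real.sqrt ((|a|/2)^2) from (Real.sqrt_sq (by positivity)).symm]
  apply Real.sqrt_lt_sqrt (by positivity)
  have : (|a|/2)^2 = a^2/4 := by rw [div_pow, sq_abs]; norm_num
  rw [this]
  nlinarith [pow_pos hc 3]

lemma base1_pos {a c : ℝ} (hc : 0 < c) :
    0 < -a / 2 + Real.sqrt (c ^ 3 / 27 + a ^ 2 / 4) := by
  have h := sqrt_pos_aux (a := a) hc
  cases abs_cases a with
  | inl h4 => rw [h4.1] at h; linarith
  | inr h4 => rw [h4.1] at h; linarith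

lemma base2_pos {a c : ℝ} (hc : 0 < c) :
    0 < a / 2 + Real.sqrt (c ^ 3 / 27 + a ^ 2 / 4) := by
  have h := sqrt_pos_aux (a := a) hc
  cases abs_cases a with
  | inl h4 => rw [h4.1] at h; linarith
  | inr h4 => rw [h4.1] at h; linarith

lemma gC_cubic {a c : ℝ} (hc : 0 < c) :
    gC (a, c) ^ 3 + c * gC (a, c) + a = 0 := by
  set s := Real.sqrt (c ^ 3 / 27 + a ^ 2 / 4) with hs
  have hb1 : (0:ℝ) < -a / 2 + s := base1_pos hc
  have hb2 : (0:ℝ) < a / 2 + s := base2_pos hc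
  set P := (-a / 2 + s) ^ ((1:ℝ)/3) with hP
  set Q := (a / 2 + s) ^ ((1:ℝ)/3) with hQ
  have hscube : ∀ x : ℝ, 0 ≤ x → (x ^ ((1:ℝ)/3)) ^ 3 = x := by
    intro x hx
    rw [← Real.rpow_natCast (x ^ ((1:ℝ)/3)) 3, ← Real.rpow_mul hx]
    norm_num
  have hP3 : P ^ 3 = -a / 2 + s := hscube _ hb1.le
  have hQ3 : Q ^ 3 = a / 2 + s := hscube _ hb2.le
  have hs2 : s ^ 2 = c ^ 3 / 27 + a ^ 2 / 4 := Real.sq_sqrt (by positivity)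
  have hPQ : P * Q = c / 3 := by
    rw [hP, hQ, ← Real.mul_rpow hb1.le hb2.le]
    have h5 : (-a / 2 + s) * (a / 2 + s) = (c/3) ^ 3 := by nlinarith [hs2]
    rw [h5, ← Real.rpow_natCast (c/3) 3, ← Real.rpow_mul (by positivity)]
    norm_num
  have hg : gC (a, c) = P - Q := rfl
  have hexp : (P - Q)^3 = P^3 - Q^3 - 3*(P*Q)*(P-Q) := by ring
  rw [hg, hexp, hP3, hQ3, hPQ]; ring

lemma cubic_uniq {a c v w : ℝ} (hc : 0 < c)
    (hv : v ^ 3 + c * v + a = 0) (hw : w ^ 3 + c * w + a = 0) : v = w := by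
  have h : (v - w) * (v^2 + v*w + w^2 + c) = 0 := by linear_combination hv - hw
  have h2 : 0 < v^2 + v*w + w^2 + c := by nlinarith [sq_nonneg (v+w), sq_nonneg v, sq_nonneg w]
  rcases mul_eq_zero.1 h with h3 | h3
  · linarith
  · linarith

lemma gC_contDiffAt {a c : ℝ} (hc : 0 < c) :
    ContDiffAt ℝ (⊤ : ℕ∞) gC (a, c) := by
  have hinner : ContDiffAt ℝ (⊤ : ℕ∞) (fun p : ℝ × ℝ => p.2 ^ 3 / 27 + p.1 ^ 2 / 4) (a, c) :=
    ((contDiffAt_snd.pow 3).div_const 27).add ((contDiffAt_fst.pow 2).div_const 4)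
  have hsq : ContDiffAt ℝ (⊤ : ℕ∞)
      (fun p : ℝ × ℝ => Real.sqrt (p.2 ^ 3 / 27 + p.1 ^ 2 / 4)) (a, c) :=
    (Real.contDiffAt_sqrt (by positivity)).comp _ hinner
  have h1 : ContDiffAt ℝ (⊤ : ℕ∞)
      (fun p : ℝ × ℝ => (-p.1 / 2 + Real.sqrt (p.2 ^ 3 / 27 + p.1 ^ 2 / 4)) ^ ((1:ℝ)/3)) (a, c) :=
    ((contDiffAt_fst.neg.div_const 2).add hsq).rpow_const_of_ne (ne_of_gt (base1_pos hc))
  have h2 : ContDiffAt ℝ (⊤ : ℕ∞)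
      (fun p : ℝ × ℝ => (p.1 / 2 + Real.sqrt (p.2 ^ 3 / 27 + p.1 ^ 2 / 4)) ^ ((1:ℝ)/3)) (a, c) :=
    ((contDiffAt_fst.div_const 2).add hsq).rpow_const_of_ne (ne_of_gt (base2_pos hc))
  exact h1.sub h2

lemma gC_fderiv {a c : ℝ} (hc : 0 < c) (h k : ℝ) :
    fderiv ℝ gC (a, c) (h, k)
      = -(h + gC (a, c) * k) / (3 * gC (a, c) ^ 2 + c) := by
  have hdiff : DifferentiableAt ℝ gC (a, c) :=
    (gC_contDiffAt hc).differentiableAt (by simp)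
  have hL : HasFDerivAt gC (fderiv ℝ gC (a, c)) (a, c) := hdiff.hasFDerivAt
  set L := fderiv ℝ gC (a, c) with hLdef
  set F : ℝ × ℝ → ℝ := fun p => gC p * gC p * gC p + p.2 * gC p + p.1 with hFdef
  have hFD := (((hL.mul hL).mul hL).add ((hasFDerivAt_snd (p := ((a:ℝ),c))).mul hL)).add
      (hasFDerivAt_fst (p := ((a:ℝ),c)))
  have hF0 : F =ᶠ[nhds ((a : ℝ), c)] (fun _ => (0:ℝ)) := by
    have hopen : {p : ℝ × ℝ | 0 < p.2} ∈ nhds ((a : ℝ), c) :=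
      (isOpen_lt continuous_const continuous_snd).mem_nhds hc
    filter_upwards [hopen] with p hp
    have h0 := gC_cubic (a := p.1) (c := p.2) hp
    show gC p * gC p * gC p + p.2 * gC p + p.1 = 0
    rw [Prod.mk.eta] at h0
    linear_combination h0
  have hzero : fderiv ℝ F (a, c) = 0 := by
    rw [hF0.fderiv_eq]; exact fderiv_const_apply 0
  have hM : fderiv ℝ F (a, c) = _ := hFD.fderiv
  rw [hzero] at hM
  have happ := congrArg (fun (M : ℝ × ℝ →L[ℝ] ℝ) => M (h, k)) hM.symm
  simp only [ContinuousLinearMap.add_apply, ContinuousLinearMap.smul_apply,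
    ContinuousLinearMap.coe_fst', ContinuousLinearMap.coe_snd',
    ContinuousLinearMap.zero_apply, smul_eq_mul, Pi.mul_apply] at happ
  have hD : 0 < 3 * gC (a, c) ^ 2 + c := by positivity
  field_simp
  nlinarith [happ]

lemma W1d_eq_gC (z : ℝ) : W1d z = gC (z, 1) := by
  simp only [W1d, gC]
  norm_num

lemma vBlow_eq {T : ℝ} (p : V3 × ℝ) (hp : p.2 < T) :
    vBlow T p 0 = gC (p.1 0, T - p.2 + p.1 1 ^ 2 + p.1 2 ^ 2) := by
  set s := T - p.2 with hsdef
  have hs : 0 < s := by simp [hsdef]; linarith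
  set x0 := p.1 0; set x1 := p.1 1; set x2 := p.1 2
  set c := s + x1 ^ 2 + x2 ^ 2 with hcdef
  have hcpos : 0 < c := by positivity
  have hs12 : (0:ℝ) < s ^ ((1:ℝ)/2) := Real.rpow_pos_of_pos hs _
  have hc12 : (0:ℝ) < c ^ ((1:ℝ)/2) := Real.rpow_pos_of_pos hcpos _
  have hs32 : (0:ℝ) < s ^ ((3:ℝ)/2) := Real.rpow_pos_of_pos hs _
  have hc32 : (0:ℝ) < c ^ ((3:ℝ)/2) := Real.rpow_pos_of_pos hcpos _
  have hsq : (s ^ ((1:ℝ)/2)) ^ 2 = s := by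
    rw [← Real.rpow_natCast (s ^ ((1:ℝ)/2)) 2, ← Real.rpow_mul hs.le]
    norm_num
  set y : V3 := ![x0 / s ^ ((3:ℝ)/2), x1 / s ^ ((1:ℝ)/2), x2 / s ^ ((1:ℝ)/2)] with hydef
  have hv1 : vBlow T p 0 = s ^ ((1:ℝ)/2) * Wbar y := by
    simp [vBlow, hydef]; rfl
  have hy0 : y 0 = x0 / s ^ ((3:ℝ)/2) := rfl
  have hy1 : y 1 = x1 / s ^ ((1:ℝ)/2) := rfl
  have hy2 : y 2 = x2 / s ^ ((1:ℝ)/2) := rfl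
  have hB : Bf y = s / c := by
    rw [Bf, hy1, hy2, div_pow, div_pow, hsq]
    rw [hcdef]
    field_simp
  have hBneg : Bf y ^ (-(1:ℝ)/2) = c ^ ((1:ℝ)/2) / s ^ ((1:ℝ)/2) := by
    rw [hB, show (-(1:ℝ)/2) = -((1:ℝ)/2) by norm_num,
      Real.rpow_neg (by positivity), Real.div_rpow hs.le hcpos.le]
    rw [inv_div]
  have hB32 : Bf y ^ ((3:ℝ)/2) = s ^ ((3:ℝ)/2) / c ^ ((3:ℝ)/2) := by
    rw [hB, Real.div_rpow hs.le hcpos.le]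
  have harg : Bf y ^ ((3:ℝ)/2) * y 0 = x0 / c ^ ((3:ℝ)/2) := by
    rw [hB32, hy0]; field_simp
  have hout : s ^ ((1:ℝ)/2) * Bf y ^ (-(1:ℝ)/2) = c ^ ((1:ℝ)/2) := by
    rw [hBneg]; field_simp
  have hv2 : vBlow T p 0 = c ^ ((1:ℝ)/2) * W1d (x0 / c ^ ((3:ℝ)/2)) := by
    rw [hv1, Wbar, harg, ← mul_assoc, hout]
  set z := x0 / c ^ ((3:ℝ)/2) with hzdef
  have hWc : W1d z ^ 3 + W1d z + z = 0 := by
    have h1 := gC_cubic (a := z) (c := 1) one_pos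
    rw [W1d_eq_gC]
    linarith
  have hc3 : (c ^ ((1:ℝ)/2)) ^ 3 = c ^ ((3:ℝ)/2) := by
    rw [← Real.rpow_natCast (c ^ ((1:ℝ)/2)) 3, ← Real.rpow_mul hcpos.le]
    norm_num
  have hcc : c * c ^ ((1:ℝ)/2) = c ^ ((3:ℝ)/2) := by
    nth_rewrite 1 [← Real.rpow_one c]
    rw [← Real.rpow_add hcpos]
    norm_num
  have hzc : c ^ ((3:ℝ)/2) * z = x0 := by
    rw [hzdef]; field_simp
  have hcube : (c ^ ((1:ℝ)/2) * W1d z) ^ 3 + c * (c ^ ((1:ℝ)/2) * W1d z) + x0 = 0 := by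
    have expand : (c ^ ((1:ℝ)/2) * W1d z) ^ 3 = (c ^ ((1:ℝ)/2))^3 * W1d z ^ 3 := by ring
    rw [expand, hc3, ← hzc]
    have h6 : c * (c ^ ((1:ℝ)/2) * W1d z) = c ^ ((3:ℝ)/2) * W1d z := by
      rw [← hcc]; ring
    rw [h6]
    linear_combination c ^ ((3:ℝ)/2) * hWc
  rw [hv2]
  exact cubic_uniq hcpos hcube (gC_cubic hcpos)

def phiT (T : ℝ) (p : V3 × ℝ) : ℝ × ℝ :=
  (p.1 0, T - p.2 + p.1 1 ^ 2 + p.1 2 ^ 2)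

def P0 : (V3 × ℝ) →L[ℝ] ℝ :=
  (ContinuousLinearMap.proj 0).comp (ContinuousLinearMap.fst ℝ V3 ℝ)
def P1 : (V3 × ℝ) →L[ℝ] ℝ :=
  (ContinuousLinearMap.proj 1).comp (ContinuousLinearMap.fst ℝ V3 ℝ)
def P2 : (V3 × ℝ) →L[ℝ] ℝ :=
  (ContinuousLinearMap.proj 2).comp (ContinuousLinearMap.fst ℝ V3 ℝ)

def PhiT (p : V3 × ℝ) : (V3 × ℝ) →L[ℝ] (ℝ × ℝ) :=
  P0.prod ((-(ContinuousLinearMap.snd ℝ V3 ℝ) + (p.1 1 • P1 + p.1 1 • P1))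
    + (p.1 2 • P2 + p.1 2 • P2))

lemma phiT_hasFDerivAt (T : ℝ) (p : V3 × ℝ) :
    HasFDerivAt (phiT T) (PhiT p) p := by
  have hfun : phiT T = fun p : V3 × ℝ =>
      (p.1 0, T - p.2 + p.1 1 * p.1 1 + p.1 2 * p.1 2) := by
    funext q; simp [phiT]; ring
  rw [hfun]
  have h0 : HasFDerivAt (fun p : V3 × ℝ => p.1 0) P0 p := P0.hasFDerivAt
  have h1 : HasFDerivAt (fun p : V3 × ℝ => p.1 1) P1 p := P1.hasFDerivAt
  have h2 : HasFDerivAt (fun p : V3 × ℝ => p.1 2) P2 p := P2.hasFDerivAt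
  have hsnd : HasFDerivAt (fun p : V3 × ℝ => T - p.2)
      (-(ContinuousLinearMap.snd ℝ V3 ℝ)) p :=
    (hasFDerivAt_snd (p := p)).const_sub T
  exact h0.prodMk (((hsnd.add (h1.mul h1)).add (h2.mul h2)))

lemma phiT_contDiffAt (T : ℝ) (p : V3 × ℝ) :
    ContDiffAt ℝ (⊤ : ℕ∞) (phiT T) p := by
  apply ContDiffAt.prodMk
  · exact P0.contDiff.contDiffAt
  · exact ((contDiffAt_const.sub contDiffAt_snd).add (P1.contDiff.contDiffAt.pow 2)).add
      (P2.contDiff.contDiffAt.pow 2)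

lemma cT_pos {T : ℝ} (p : V3 × ℝ) (hp : p.2 < T) :
    0 < T - p.2 + p.1 1 ^ 2 + p.1 2 ^ 2 := by
  nlinarith [sq_nonneg (p.1 1), sq_nonneg (p.1 2)]

lemma key_fderiv (T : ℝ) (p : V3 × ℝ) (hp : p.2 < T) (w : V3 × ℝ) :
    fderiv ℝ (fun q => vBlow T q 0) p w
      = fderiv ℝ gC (phiT T p)
          (w.1 0, -w.2 + 2 * p.1 1 * w.1 1 + 2 * p.1 2 * w.1 2) := by
  have hc : 0 < T - p.2 + p.1 1 ^ 2 + p.1 2 ^ 2 := cT_pos p hp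
  have hgdiff : DifferentiableAt ℝ gC (phiT T p) :=
    (gC_contDiffAt hc).differentiableAt (by simp)
  have hgL : HasFDerivAt gC (fderiv ℝ gC (phiT T p)) (phiT T p) := hgdiff.hasFDerivAt
  have hu : HasFDerivAt (gC ∘ phiT T)
      ((fderiv ℝ gC (phiT T p)).comp (PhiT p)) p :=
    hgL.comp p (phiT_hasFDerivAt T p)
  have hev : (fun q => vBlow T q 0) =ᶠ[nhds p] (gC ∘ phiT T) := by
    have hopen : {q : V3 × ℝ | q.2 < T} ∈ nhds p :=
      (isOpen_lt continuous_snd continuous_const).mem_nhds hp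
    filter_upwards [hopen] with q hq
    exact vBlow_eq q hq
  rw [hev.fderiv_eq, hu.fderiv]
  simp only [ContinuousLinearMap.comp_apply, PhiT, ContinuousLinearMap.prod_apply,
    ContinuousLinearMap.add_apply, ContinuousLinearMap.smul_apply,
    ContinuousLinearMap.neg_apply, ContinuousLinearMap.coe_snd',
    P0, P1, P2, ContinuousLinearMap.coe_comp', Function.comp_apply,
    ContinuousLinearMap.coe_fst', ContinuousLinearMap.proj_apply, smul_eq_mul]
  congr 2
  ring

/-- Exact self-similar blow-up solution of the 3D Burgers equation: `v` is smooth on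
`ℝ³ × (−∞, T)`, solves `∂ₜv + (v·∇)v = 0` there, satisfies
`∂₁v₁(0,t) = −1/(T−t)`, and `∂₁v₁(0,t) → −∞` as `t → T⁻` (gradient blow-up at the
single space-time point `(0, T)`). -/
theorem vBlow_selfsimilar_burgers_blowup (T : ℝ) :
    ContDiffOn ℝ (⊤ : ℕ∞) (vBlow T) (Set.univ ×ˢ Set.Iio T) ∧
    (∀ x : V3, ∀ t < T, ∀ i : Fin 3,
      pt (fun p => vBlow T p i) (x, t)
        + (∑ j : Fin 3, vBlow T (x, t) j * pd j (fun p => vBlow T p i) (x, t)) = 0) ∧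
    (∀ t < T, pd 0 (fun p => vBlow T p 0) ((0 : V3), t) = -(1 / (T - t))) ∧
    Filter.Tendsto (fun t => pd 0 (fun p => vBlow T p 0) ((0 : V3), t))
      (nhdsWithin T (Set.Iio T)) Filter.atBot := by
  have hz1 : (fun p : V3 × ℝ => vBlow T p 1) = fun _ => (0:ℝ) := by
    funext q; simp [vBlow]
  have hz2 : (fun p : V3 × ℝ => vBlow T p 2) = fun _ => (0:ℝ) := by
    funext q; simp [vBlow]
  have hpd0 : ∀ t < T, pd 0 (fun p => vBlow T p 0) ((0 : V3), t) = -(1 / (T - t)) := by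
    intro t ht
    have hc : 0 < T - t := sub_pos.2 ht
    have hkey := key_fderiv T ((0 : V3), t) ht ((Pi.single 0 1 : V3), 0)
    rw [pd, hkey]
    have hphi : phiT T ((0 : V3), t) = (0, T - t) := by
      simp [phiT]
    rw [hphi]
    have hvec : ((Pi.single (0 : Fin 3) (1:ℝ) : V3) 0,
        -(0:ℝ) + 2 * ((0:V3), t).1 1 * (Pi.single (0 : Fin 3) (1:ℝ) : V3) 1
          + 2 * ((0:V3), t).1 2 * (Pi.single (0 : Fin 3) (1:ℝ) : V3) 2) = ((1:ℝ), (0:ℝ)) := by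
      simp
    rw [hvec, gC_fderiv hc 1 0]
    have hg0 : gC (0, T - t) = 0 := by
      refine cubic_uniq (a := 0) hc ?_ (by ring)
      have := gC_cubic (a := 0) (c := T - t) hc
      linarith
    rw [hg0]
    norm_num [one_div, neg_div]
  refine ⟨?_, ?_, hpd0, ?_⟩
  · rw [contDiffOn_pi]
    intro i
    fin_cases i
    · intro q hq
      have hq2 : q.2 < T := hq.2
      have hc : 0 < T - q.2 + q.1 1 ^ 2 + q.1 2 ^ 2 := cT_pos q hq2
      have hsm : ContDiffAt ℝ (⊤ : ℕ∞) (gC ∘ phiT T) q :=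
        (gC_contDiffAt hc).comp q (phiT_contDiffAt T q)
      have hev : (fun q => vBlow T q 0) =ᶠ[nhds q] (gC ∘ phiT T) := by
        have hopen : {r : V3 × ℝ | r.2 < T} ∈ nhds q :=
          (isOpen_lt continuous_snd continuous_const).mem_nhds hq2
        filter_upwards [hopen] with r hr
        exact vBlow_eq r hr
      exact ((hsm.congr_of_eventuallyEq hev).contDiffWithinAt)
    · show ContDiffOn ℝ (⊤ : ℕ∞) (fun q : V3 × ℝ => vBlow T q 1) (Set.univ ×ˢ Set.Iio T)
      rw [hz1]; exact contDiffOn_const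
    · show ContDiffOn ℝ (⊤ : ℕ∞) (fun q : V3 × ℝ => vBlow T q 2) (Set.univ ×ˢ Set.Iio T)
      rw [hz2]; exact contDiffOn_const
  · intro x t ht i
    fin_cases i
    · -- i = 0
      have hc : 0 < T - t + x 1 ^ 2 + x 2 ^ 2 := cT_pos ((x : V3), t) ht
      set g := gC (x 0, T - t + x 1 ^ 2 + x 2 ^ 2) with hgdef
      have hD : 0 < 3 * g ^ 2 + (T - t + x 1 ^ 2 + x 2 ^ 2) := by positivity
      have hphi : phiT T ((x : V3), t) = (x 0, T - t + x 1 ^ 2 + x 2 ^ 2) := rfl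
      have hpt : pt (fun p => vBlow T p 0) (x, t)
          = -((0:ℝ) + g * (-1)) / (3 * g ^ 2 + (T - t + x 1 ^ 2 + x 2 ^ 2)) := by
        have hkey := key_fderiv T ((x : V3), t) ht ((0 : V3), 1)
        rw [pt, hkey, hphi]
        have hvec : (((0:V3)) 0, -(1:ℝ) + 2 * x 1 * ((0:V3)) 1 + 2 * x 2 * ((0:V3)) 2)
            = ((0:ℝ), (-1:ℝ)) := by simp
        rw [hvec]
        exact gC_fderiv hc 0 (-1)
      have hpd : pd 0 (fun p => vBlow T p 0) (x, t)
          = -((1:ℝ) + g * 0) / (3 * g ^ 2 + (T - t + x 1 ^ 2 + x 2 ^ 2)) := by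
        have hkey := key_fderiv T ((x : V3), t) ht ((Pi.single 0 1 : V3), 0)
        rw [pd, hkey, hphi]
        have hvec : ((Pi.single (0 : Fin 3) (1:ℝ) : V3) 0,
            -(0:ℝ) + 2 * x 1 * (Pi.single (0 : Fin 3) (1:ℝ) : V3) 1
              + 2 * x 2 * (Pi.single (0 : Fin 3) (1:ℝ) : V3) 2) = ((1:ℝ), (0:ℝ)) := by
          simp
        rw [hvec]
        exact gC_fderiv hc 1 0
      have hv0 : vBlow T ((x : V3), t) 0 = g := vBlow_eq ((x : V3), t) ht
      have hv1 : vBlow T ((x : V3), t) 1 = 0 := by simp [vBlow]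
      have hv2 : vBlow T ((x : V3), t) 2 = 0 := by simp [vBlow]
      rw [Fin.sum_univ_three]
      show pt (fun p => vBlow T p 0) (x, t)
        + (vBlow T (x, t) 0 * pd 0 (fun p => vBlow T p 0) (x, t)
          + vBlow T (x, t) 1 * pd 1 (fun p => vBlow T p 0) (x, t)
          + vBlow T (x, t) 2 * pd 2 (fun p => vBlow T p 0) (x, t)) = 0
      rw [hpt, hpd, hv0, hv1, hv2]
      field_simp
      ring
    · -- i = 1
      rw [Fin.sum_univ_three]
      show pt (fun p => vBlow T p 1) (x, t)
        + (vBlow T (x, t) 0 * pd 0 (fun p => vBlow T p 1) (x, t)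
          + vBlow T (x, t) 1 * pd 1 (fun p => vBlow T p 1) (x, t)
          + vBlow T (x, t) 2 * pd 2 (fun p => vBlow T p 1) (x, t)) = 0
      rw [hz1]
      simp [pt, pd, fderiv_fun_const]
    · -- i = 2
      rw [Fin.sum_univ_three]
      show pt (fun p => vBlow T p 2) (x, t)
        + (vBlow T (x, t) 0 * pd 0 (fun p => vBlow T p 2) (x, t)
          + vBlow T (x, t) 1 * pd 1 (fun p => vBlow T p 2) (x, t)
          + vBlow T (x, t) 2 * pd 2 (fun p => vBlow T p 2) (x, t)) = 0
      rw [hz2]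
      simp [pt, pd, fderiv_fun_const]
  · -- blow-up
    have h1 : Filter.Tendsto (fun t => T - t) (nhdsWithin T (Set.Iio T))
        (nhdsWithin 0 (Set.Ioi 0)) := by
      apply tendsto_nhdsWithin_of_tendsto_nhds_of_eventually_within
      · have : Filter.Tendsto (fun t : ℝ => T - t) (nhds T) (nhds (T - T)) :=
          (continuous_const.sub continuous_id).tendsto T
        simpa using this.mono_left nhdsWithin_le_nhds
      · filter_upwards [self_mem_nhdsWithin] with t ht
        exact sub_pos.2 (Set.mem_Iio.mp ht)
    have h2 : Filter.Tendsto (fun t => (T - t)⁻¹) (nhdsWithin T (Set.Iio T))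
        Filter.atTop := tendsto_inv_nhdsGT_zero.comp h1
    have h3 : Filter.Tendsto (fun t => -(T - t)⁻¹) (nhdsWithin T (Set.Iio T))
        Filter.atBot := Filter.tendsto_neg_atTop_atBot.comp h2
    apply h3.congr'
    filter_upwards [self_mem_nhdsWithin] with t ht
    rw [hpd0 t (Set.mem_Iio.mp ht), one_div]
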